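/- Let τ > 0 and let A : [0,τ) → ℝ^{n×n} be continuous with A(t) symmetric for every t. If ∫₀ᵗ λ_max(A(s)) ds → −∞ as t → τ⁻, then every differentiable x : [0,τ) → ℝⁿ with x'(t) = A(t)x(t) satisfies ‖x(t)‖ → 0 as t → τ⁻; i.e., the system ẋ = A(t)x is prescribed-time attractive at τ. -/

import Mathlib

open Matrix Filter Topology

/-- Eigenvalues of a real matrix that is Hermitian (= symmetric); junk value `0` otherwise. -/
noncomputable def eigs {n : ℕ} (M : Matrix (Fin n) (Fin n) ℝ) : Fin n → ℝ :=
  if h : M.IsHermitian then h.eigenvalues else 0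

/-- Largest eigenvalue of a real symmetric matrix. -/
noncomputable def lamMax {n : ℕ} (M : Matrix (Fin n) (Fin n) ℝ) : ℝ := ⨆ i, eigs M i

/-- Smallest eigenvalue of a real symmetric matrix. -/
noncomputable def lamMin {n : ℕ} (M : Matrix (Fin n) (Fin n) ℝ) : ℝ := ⨅ i, eigs M i

/-- Logarithmic norm w.r.t. the Euclidean norm: `μ(M) = λ_max((M + Mᵀ)/2)`. -/
noncomputable def logNorm {n : ℕ} (M : Matrix (Fin n) (Fin n) ℝ) : ℝ :=
  lamMax ((1 / 2 : ℝ) • (M + Mᵀ))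

/-- A matrix acting on Euclidean space. -/
noncomputable def mulVecE {n : ℕ} (M : Matrix (Fin n) (Fin n) ℝ)
    (v : EuclideanSpace ℝ (Fin n)) : EuclideanSpace ℝ (Fin n) :=
  Matrix.toEuclideanCLM (𝕜 := ℝ) M v

/-- Operator norm of a matrix induced by the Euclidean vector norm. -/
noncomputable def opNorm {n : ℕ} (M : Matrix (Fin n) (Fin n) ℝ) : ℝ :=
  ‖Matrix.toEuclideanCLM (𝕜 := ℝ) M‖

open scoped RealInnerProductSpace

lemma eigs_eq {n : ℕ} {M : Matrix (Fin n) (Fin n) ℝ} (hM : M.IsHermitian) :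
    eigs M = hM.eigenvalues := dif_pos hM

lemma eigenvalue_le_lamMax {n : ℕ} {M : Matrix (Fin n) (Fin n) ℝ} (hM : M.IsHermitian)
    (i : Fin n) : hM.eigenvalues i ≤ lamMax M := by
  rw [← eigs_eq hM]
  exact le_ciSup (Set.Finite.bddAbove (Set.finite_range _)) i

lemma mulVecE_eigenvectorBasis {n : ℕ} {M : Matrix (Fin n) (Fin n) ℝ} (hM : M.IsHermitian)
    (i : Fin n) :
    mulVecE M (hM.eigenvectorBasis i) = hM.eigenvalues i • hM.eigenvectorBasis i := by
  have h := hM.mulVec_eigenvectorBasis i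
  apply (WithLp.equiv 2 (Fin n → ℝ)).injective
  rw [mulVecE, WithLp.equiv_apply, Matrix.ofLp_toEuclideanCLM]
  simpa using h

lemma isSelfAdjoint_toEuclideanCLM {n : ℕ} {M : Matrix (Fin n) (Fin n) ℝ}
    (hM : M.IsHermitian) : IsSelfAdjoint (Matrix.toEuclideanCLM (𝕜 := ℝ) M) :=
  hM.isSelfAdjoint.map (Matrix.toEuclideanCLM (𝕜 := ℝ))

lemma inner_mulVecE_symm {n : ℕ} {M : Matrix (Fin n) (Fin n) ℝ} (hM : M.IsHermitian)
    (v w : EuclideanSpace ℝ (Fin n)) : ⟪mulVecE M v, w⟫ = ⟪v, mulVecE M w⟫ :=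
  (isSelfAdjoint_toEuclideanCLM hM).isSymmetric v w

lemma repr_mulVecE {n : ℕ} {M : Matrix (Fin n) (Fin n) ℝ} (hM : M.IsHermitian)
    (v : EuclideanSpace ℝ (Fin n)) (i : Fin n) :
    hM.eigenvectorBasis.repr (mulVecE M v) i =
      hM.eigenvalues i * hM.eigenvectorBasis.repr v i := by
  rw [OrthonormalBasis.repr_apply_apply, OrthonormalBasis.repr_apply_apply,
    ← inner_mulVecE_symm hM, mulVecE_eigenvectorBasis hM i, real_inner_smul_left]

lemma inner_mulVecE_le {n : ℕ} {M : Matrix (Fin n) (Fin n) ℝ} (hM : M.IsHermitian)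
    (v : EuclideanSpace ℝ (Fin n)) : ⟪v, mulVecE M v⟫ ≤ lamMax M * ‖v‖ ^ 2 := by
  set b := hM.eigenvectorBasis with hb
  calc ⟪v, mulVecE M v⟫ = ⟪b.repr v, b.repr (mulVecE M v)⟫ := (b.repr.inner_map_map _ _).symm
    _ = ∑ i, b.repr v i * (hM.eigenvalues i * b.repr v i) := by
        rw [PiLp.inner_apply]
        exact Finset.sum_congr rfl fun i _ => by rw [repr_mulVecE hM v i]; simp [mul_comm, hb]
    _ ≤ ∑ i, lamMax M * (b.repr v i * b.repr v i) := by
        refine Finset.sum_le_sum fun i _ => ?_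
        have h1 : hM.eigenvalues i ≤ lamMax M := eigenvalue_le_lamMax hM i
        have h2 : (0:ℝ) ≤ b.repr v i * b.repr v i := mul_self_nonneg _
        calc b.repr v i * (hM.eigenvalues i * b.repr v i)
            = hM.eigenvalues i * (b.repr v i * b.repr v i) := by ring
          _ ≤ lamMax M * (b.repr v i * b.repr v i) := mul_le_mul_of_nonneg_right h1 h2
    _ = lamMax M * ⟪b.repr v, b.repr v⟫ := by
        rw [PiLp.inner_apply, Finset.mul_sum]
        exact Finset.sum_congr rfl fun i _ => by simp [sq]
    _ = lamMax M * ‖v‖ ^ 2 := by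
        rw [real_inner_self_eq_norm_sq, b.repr.norm_map]

lemma exists_unit_inner_eq {n : ℕ} (hn : 0 < n) {M : Matrix (Fin n) (Fin n) ℝ}
    (hM : M.IsHermitian) :
    ∃ v : EuclideanSpace ℝ (Fin n), ‖v‖ = 1 ∧ ⟪v, mulVecE M v⟫ = lamMax M := by
  haveI : Nonempty (Fin n) := ⟨⟨0, hn⟩⟩
  obtain ⟨i, hi⟩ := Finite.exists_max (eigs M)
  refine ⟨hM.eigenvectorBasis i, hM.eigenvectorBasis.orthonormal.1 i, ?_⟩
  have hmax : lamMax M = hM.eigenvalues i := by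
    rw [← eigs_eq hM]
    exact le_antisymm (ciSup_le hi) (le_ciSup (Set.Finite.bddAbove (Set.finite_range _)) i)
  rw [hmax, mulVecE_eigenvectorBasis hM i, real_inner_smul_right,
    real_inner_self_eq_norm_sq, hM.eigenvectorBasis.orthonormal.1 i]
  ring

lemma lamMax_le_add {n : ℕ} (hn : 0 < n) {M N : Matrix (Fin n) (Fin n) ℝ}
    (hM : M.IsHermitian) (hN : N.IsHermitian) :
    lamMax M ≤ lamMax N + opNorm (M - N) := by
  obtain ⟨v, hv1, hv2⟩ := exists_unit_inner_eq hn hM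
  have h1 : ⟪v, mulVecE N v⟫ ≤ lamMax N := by
    simpa [hv1] using inner_mulVecE_le hN v
  have h2 : ⟪v, mulVecE (M - N) v⟫ ≤ opNorm (M - N) := by
    calc ⟪v, mulVecE (M - N) v⟫ ≤ ‖v‖ * ‖mulVecE (M - N) v‖ := real_inner_le_norm _ _
      _ ≤ ‖v‖ * (opNorm (M - N) * ‖v‖) := by
          have := (Matrix.toEuclideanCLM (𝕜 := ℝ) (M - N)).le_opNorm v
          exact mul_le_mul_of_nonneg_left this (norm_nonneg v)
      _ = opNorm (M - N) := by rw [hv1]; ring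
  have h3 : mulVecE M v = mulVecE N v + mulVecE (M - N) v := by
    simp only [mulVecE, map_sub]
    simp
  rw [← hv2, h3, inner_add_right]
  linarith

lemma abs_lamMax_sub_le {n : ℕ} (hn : 0 < n) {M N : Matrix (Fin n) (Fin n) ℝ}
    (hM : M.IsHermitian) (hN : N.IsHermitian) :
    |lamMax M - lamMax N| ≤ opNorm (M - N) := by
  rw [abs_sub_le_iff]
  constructor
  · linarith [lamMax_le_add hn hM hN]
  · have := lamMax_le_add hn hN hM
    have hop : opNorm (N - M) = opNorm (M - N) := by
      rw [opNorm, opNorm, ← norm_neg]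
      congr 1
      simp [map_sub]
    linarith [hop ▸ this]

lemma continuousOn_lamMax_comp {n : ℕ} (hn : 0 < n) {A : ℝ → Matrix (Fin n) (Fin n) ℝ}
    {s : Set ℝ} (hA : ContinuousOn A s) (hsymm : ∀ t ∈ s, (A t).IsHermitian) :
    ContinuousOn (fun t => lamMax (A t)) s := by
  have hcont : Continuous fun M : Matrix (Fin n) (Fin n) ℝ => Matrix.toEuclideanCLM (𝕜 := ℝ) M :=
    LinearMap.continuous_of_finiteDimensional
      (E := Matrix (Fin n) (Fin n) ℝ)
      { toFun := fun M => Matrix.toEuclideanCLM (𝕜 := ℝ) M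
        map_add' := fun a b => by simp
        map_smul' := fun c a => _root_.map_smul (Matrix.toEuclideanCLM (𝕜 := ℝ)) c a }
  intro t₀ ht₀
  have hg : Tendsto (fun t => Matrix.toEuclideanCLM (𝕜 := ℝ) (A t)) (𝓝[s] t₀)
      (𝓝 (Matrix.toEuclideanCLM (𝕜 := ℝ) (A t₀))) :=
    hcont.continuousAt.comp_continuousWithinAt (hA t₀ ht₀)
  have hdist : Tendsto (fun t => dist (Matrix.toEuclideanCLM (𝕜 := ℝ) (A t))
      (Matrix.toEuclideanCLM (𝕜 := ℝ) (A t₀))) (𝓝[s] t₀) (𝓝 0) :=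
    tendsto_iff_dist_tendsto_zero.mp hg
  have : Tendsto (fun t => dist (lamMax (A t)) (lamMax (A t₀))) (𝓝[s] t₀) (𝓝 0) := by
    refine squeeze_zero' (Filter.Eventually.of_forall fun t => dist_nonneg) ?_ hdist
    filter_upwards [self_mem_nhdsWithin] with t ht
    have h1 := abs_lamMax_sub_le hn (hsymm t ht) (hsymm t₀ ht₀)
    rw [Real.dist_eq]
    refine h1.trans (le_of_eq ?_)
    rw [dist_eq_norm, opNorm, map_sub]
  exact tendsto_iff_dist_tendsto_zero.mpr this

/-- Remark 3: for a symmetric system, `∫₀ᵗ λ_max(A(s)) ds → -∞` as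
`t → τ⁻` implies prescribed-time attractivity at `τ`. -/
theorem stmt16 {n : ℕ} (τ : ℝ) (hτ : 0 < τ)
    (A : ℝ → Matrix (Fin n) (Fin n) ℝ) (hA : ContinuousOn A (Set.Ico 0 τ))
    (hsymm : ∀ t ∈ Set.Ico (0 : ℝ) τ, (A t).IsHermitian)
    (hint : Tendsto (fun t => ∫ s in (0 : ℝ)..t, lamMax (A s)) (𝓝[<] τ) atBot)
    (x : ℝ → EuclideanSpace ℝ (Fin n))
    (hx : ∀ t ∈ Set.Ico (0 : ℝ) τ, HasDerivAt x (mulVecE (A t) (x t)) t) :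
    Tendsto (fun t => ‖x t‖) (𝓝[<] τ) (𝓝 0) := by
  rcases Nat.eq_zero_or_pos n with hn | hn
  · subst hn
    have hzero : (fun t => ‖x t‖) = fun _ => (0 : ℝ) :=
      funext fun t => by rw [Subsingleton.elim (x t) 0, norm_zero]
    rw [hzero]
    exact tendsto_const_nhds
  -- notation
  set L : ℝ → ℝ := fun s => lamMax (A s) with hLdef
  have hL : ContinuousOn L (Set.Ico 0 τ) := continuousOn_lamMax_comp hn hA hsymm
  set F : ℝ → ℝ := fun t => ∫ s in (0 : ℝ)..t, L s with hFdef
  have key : ∀ t₁ ∈ Set.Ico (0 : ℝ) τ, ‖x t₁‖ ≤ ‖x 0‖ * Real.exp (F t₁) := by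
    intro t₁ ht₁
    have hIccsub : Set.Icc (0:ℝ) t₁ ⊆ Set.Ico 0 τ := fun u hu => ⟨hu.1, lt_of_le_of_lt hu.2 ht₁.2⟩
    set φ : ℝ → ℝ := fun s => ⟪x s, x s⟫ * Real.exp (-(2 * F s)) with hφdef
    -- derivative at interior points
    have hderiv : ∀ s ∈ Set.Ioo (0:ℝ) t₁,
        HasDerivAt φ ((⟪x s, mulVecE (A s) (x s)⟫ + ⟪mulVecE (A s) (x s), x s⟫) *
          Real.exp (-(2 * F s)) +
          ⟪x s, x s⟫ * (Real.exp (-(2 * F s)) * -(2 * L s))) s := by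
      intro s hs
      have hsmem : s ∈ Set.Ico (0:ℝ) τ := ⟨hs.1.le, lt_trans hs.2 ht₁.2⟩
      have hxd := hx s hsmem
      have hg : HasDerivAt (fun u => ⟪x u, x u⟫)
          (⟪x s, mulVecE (A s) (x s)⟫ + ⟪mulVecE (A s) (x s), x s⟫) s := hxd.inner ℝ hxd
      have hIoo : ContinuousOn L (Set.Ioo 0 τ) := hL.mono Set.Ioo_subset_Ico_self
      have hsIoo : s ∈ Set.Ioo (0:ℝ) τ := ⟨hs.1, lt_trans hs.2 ht₁.2⟩
      have hFd : HasDerivAt F (L s) s := by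
        refine intervalIntegral.integral_hasDerivAt_right ?_ ?_ ?_
        · refine (hL.mono ?_).intervalIntegrable
          rw [Set.uIcc_of_le hs.1.le]
          exact fun u hu => ⟨hu.1, lt_of_le_of_lt hu.2 hsmem.2⟩
        · exact hIoo.stronglyMeasurableAtFilter isOpen_Ioo s hsIoo
        · exact hIoo.continuousAt (isOpen_Ioo.mem_nhds hsIoo)
      have hE : HasDerivAt (fun u => Real.exp (-(2 * F u)))
          (Real.exp (-(2 * F s)) * -(2 * L s)) s := ((hFd.const_mul 2).neg).exp
      exact hg.mul hE
    -- antitone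
    have hxc : ContinuousOn x (Set.Icc 0 t₁) := fun u hu =>
      ((hx u (hIccsub hu)).continuousAt).continuousWithinAt
    have hFc : ContinuousOn F (Set.Icc 0 t₁) := by
      have hint2 : MeasureTheory.IntegrableOn L (Set.uIcc 0 t₁) MeasureTheory.volume := by
        rw [Set.uIcc_of_le ht₁.1]
        exact (hL.mono hIccsub).integrableOn_compact isCompact_Icc
      have := intervalIntegral.continuousOn_primitive_interval hint2
      rwa [Set.uIcc_of_le ht₁.1] at this
    have hφc : ContinuousOn φ (Set.Icc 0 t₁) :=
      (hxc.inner hxc).mul (Real.continuous_exp.comp_continuousOn ((continuousOn_const.mul hFc).neg))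
    have hmono : AntitoneOn φ (Set.Icc 0 t₁) := by
      refine antitoneOn_of_deriv_nonpos (convex_Icc 0 t₁) hφc ?_ ?_
      · rw [interior_Icc]
        exact fun s hs => ((hderiv s hs).differentiableAt).differentiableWithinAt
      · rw [interior_Icc]
        intro s hs
        rw [(hderiv s hs).deriv]
        have hsmem : s ∈ Set.Ico (0:ℝ) τ := ⟨hs.1.le, lt_trans hs.2 ht₁.2⟩
        have hray : ⟪x s, mulVecE (A s) (x s)⟫ ≤ L s * ‖x s‖ ^ 2 :=
          inner_mulVecE_le (hsymm s hsmem) (x s)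
        have hsymm2 : ⟪mulVecE (A s) (x s), x s⟫ = ⟪x s, mulVecE (A s) (x s)⟫ :=
          real_inner_comm _ _
        have hnorm : ⟪x s, x s⟫ = ‖x s‖ ^ 2 := real_inner_self_eq_norm_sq _
        have hexp : (0:ℝ) < Real.exp (-(2 * F s)) := Real.exp_pos _
        rw [hsymm2, hnorm]
        nlinarith [hray, hexp]
    have h01 : (0:ℝ) ∈ Set.Icc (0:ℝ) t₁ := ⟨le_refl 0, ht₁.1⟩
    have ht11 : t₁ ∈ Set.Icc (0:ℝ) t₁ := ⟨ht₁.1, le_refl t₁⟩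
    have hle := hmono h01 ht11 ht₁.1
    have hF0 : F 0 = 0 := intervalIntegral.integral_same
    have hφ0 : φ 0 = ‖x 0‖ ^ 2 := by
      have h0 : φ 0 = ⟪x 0, x 0⟫ * Real.exp (-(2 * F 0)) := rfl
      rw [h0, hF0, real_inner_self_eq_norm_sq]
      simp
    have hφt : φ t₁ = ‖x t₁‖ ^ 2 * Real.exp (-(2 * F t₁)) := by
      have h0 : φ t₁ = ⟪x t₁, x t₁⟫ * Real.exp (-(2 * F t₁)) := rfl
      rw [h0, real_inner_self_eq_norm_sq]
    rw [hφ0, hφt] at hle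
    -- conclude
    have hsq : ‖x t₁‖ ^ 2 ≤ (‖x 0‖ * Real.exp (F t₁)) ^ 2 := by
      have hexp : (0:ℝ) < Real.exp (-(2 * F t₁)) := Real.exp_pos _
      have h2 : ‖x t₁‖ ^ 2 ≤ ‖x 0‖ ^ 2 * Real.exp (2 * F t₁) := by
        have := mul_le_mul_of_nonneg_right hle (le_of_lt (Real.exp_pos (2 * F t₁)))
        rwa [mul_assoc, ← Real.exp_add, neg_add_cancel, Real.exp_zero, mul_one] at this
      calc ‖x t₁‖ ^ 2 ≤ ‖x 0‖ ^ 2 * Real.exp (2 * F t₁) := h2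
        _ = (‖x 0‖ * Real.exp (F t₁)) ^ 2 := by
            rw [mul_pow, ← Real.exp_nat_mul]
            ring_nf
    have hs1 := Real.sqrt_le_sqrt hsq
    rwa [Real.sqrt_sq (norm_nonneg _), Real.sqrt_sq (by positivity)] at hs1
  -- final limit
  have hexp : Tendsto (fun t => ‖x 0‖ * Real.exp (F t)) (𝓝[<] τ) (𝓝 0) := by
    have h1 : Tendsto (fun t => Real.exp (F t)) (𝓝[<] τ) (𝓝 0) :=
      Real.tendsto_exp_atBot.comp hint
    simpa using h1.const_mul ‖x 0‖
  have hev : ∀ᶠ t in 𝓝[<] τ, t ∈ Set.Ico (0:ℝ) τ := by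
    have h1 : Set.Ioo (0:ℝ) τ ∈ 𝓝[<] τ := by
      rw [← Set.Iio_inter_Ioi]
      exact Filter.inter_mem self_mem_nhdsWithin
        (mem_nhdsWithin_of_mem_nhds (Ioi_mem_nhds hτ))
    filter_upwards [h1] with t ht
    exact ⟨ht.1.le, ht.2⟩
  refine squeeze_zero' ?_ ?_ hexp
  · exact Filter.Eventually.of_forall fun t => norm_nonneg _
  · filter_upwards [hev] with t ht
    exact key t ht
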